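/- Rational factorization of G in the skew-symmetric case (equation (5.6)). Assume σ22 ≠ 0, detR ≠ 0 and the skew-symmetric condition 2σ12·r11·r22 = σ11·r21·r22 + σ22·r12·r11; set α2 = 2r22(r21·μ1 − r11·μ2)/(σ22·detR). Let θ1 ∈ ℝ and θ2 ∈ ℂ with Im θ2 ≠ 0 and γ(θ1, θ2) = 0. Then γ1(θ1,θ2)·γ2(θ1,conj θ2)·(α2 − conj θ2) = γ2(θ1,θ2)·γ1(θ1,conj θ2)·(α2 − θ2); this is the cross-multiplied form of G(θ2) = (α2 − θ2)/(α2 − conj θ2) on the curve ℛ, i.e. G(θ2) = F(θ2)/F(conj θ2) with F(θ2) = α2 − θ2. -/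

import Mathlib

open Complex

/-- Rational factorization of G in the skew-symmetric case (equation (5.6)). -/
theorem stmt10 (σ11 σ22 σ12 μ1 μ2 r11 r12 r21 r22 : ℝ)
    (hσ22 : σ22 ≠ 0) (hdetR : r11 * r22 - r12 * r21 ≠ 0)
    (hskew : 2 * σ12 * r11 * r22 = σ11 * r21 * r22 + σ22 * r12 * r11)
    (α2 : ℝ)
    (hα2 : α2 = 2 * r22 * (r21 * μ1 - r11 * μ2) / (σ22 * (r11 * r22 - r12 * r21)))
    (θ1 : ℝ) (θ2 : ℂ) (hθ2 : θ2.im ≠ 0)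
    (hker : (1 / 2 : ℂ) * ((σ11 : ℂ) * (θ1 : ℂ) ^ 2 + 2 * (σ12 : ℂ) * (θ1 : ℂ) * θ2
        + (σ22 : ℂ) * θ2 ^ 2)
      + (μ1 : ℂ) * (θ1 : ℂ) + (μ2 : ℂ) * θ2 = 0) :
    ((r11 : ℂ) * (θ1 : ℂ) + (r21 : ℂ) * θ2)
        * ((r12 : ℂ) * (θ1 : ℂ) + (r22 : ℂ) * starRingEnd ℂ θ2)
        * ((α2 : ℂ) - starRingEnd ℂ θ2)
      = ((r12 : ℂ) * (θ1 : ℂ) + (r22 : ℂ) * θ2)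
        * ((r11 : ℂ) * (θ1 : ℂ) + (r21 : ℂ) * starRingEnd ℂ θ2)
        * ((α2 : ℂ) - θ2) := by
  set x : ℝ := θ2.re with hx
  set y : ℝ := θ2.im with hy
  have hθ2eq : θ2 = (x : ℂ) + (y : ℂ) * I := by
    rw [hx, hy]; exact (Complex.re_add_im θ2).symm
  have hconj : starRingEnd ℂ θ2 = (x : ℂ) - (y : ℂ) * I := by
    rw [hθ2eq]; simp [Complex.ext_iff]
  -- imaginary part of the kernel equation
  rw [hθ2eq, Complex.ext_iff] at hker
  obtain ⟨hre, him'⟩ := hker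
  simp [Complex.add_re, Complex.add_im, Complex.mul_re, Complex.mul_im, pow_two] at hre him'
  have him : y * (σ12 * θ1 + σ22 * x + μ2) = 0 := by linear_combination him'
  have hC1 : σ12 * θ1 + σ22 * x + μ2 = 0 := by
    rcases mul_eq_zero.mp him with h | h
    · exact absurd h hθ2
    · exact h
  -- real part of the kernel equation
  have hC2 : (1/2) * σ11 * θ1^2 + σ12 * θ1 * x + (1/2) * σ22 * x^2
      - (1/2) * σ22 * y^2 + μ1 * θ1 + μ2 * x = 0 := by linear_combination hre
  -- the cleared-denominator form of hα2
  have hβ : α2 * (σ22 * (r11 * r22 - r12 * r21)) = 2 * r22 * (r21 * μ1 - r11 * μ2) := by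
    rw [hα2]
    rw [div_mul_cancel₀ _ (mul_ne_zero hσ22 hdetR)]
  -- the key real identity
  have key : 2 * r22 * (r21 * μ1 - r11 * μ2) * θ1
      = σ22 * r11 * r12 * θ1^2 + 2 * r11 * r22 * σ22 * θ1 * x
        + r21 * r22 * σ22 * (x^2 + y^2) := by
    linear_combination θ1^2 * hskew - 2 * r22 * (r11 * θ1 + r21 * x) * hC1
      + 2 * r21 * r22 * hC2
  -- pass to ℂ and cancel σ22
  have hβC : (α2 : ℂ) * ((σ22 : ℂ) * ((r11 : ℂ) * r22 - (r12 : ℂ) * r21))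
      = 2 * (r22 : ℂ) * ((r21 : ℂ) * μ1 - (r11 : ℂ) * μ2) := by
    exact_mod_cast congrArg (fun t : ℝ => (t : ℂ)) hβ
  have keyC : 2 * (r22 : ℂ) * ((r21 : ℂ) * μ1 - (r11 : ℂ) * μ2) * θ1
      = (σ22 : ℂ) * r11 * r12 * (θ1 : ℂ)^2 + 2 * (r11 : ℂ) * r22 * σ22 * θ1 * x
        + (r21 : ℂ) * r22 * σ22 * ((x : ℂ)^2 + (y : ℂ)^2) := by
    exact_mod_cast congrArg (fun t : ℝ => (t : ℂ)) key
  have hσ22C : (σ22 : ℂ) ≠ 0 := by exact_mod_cast hσ22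
  apply mul_left_cancel₀ hσ22C
  rw [hconj, hθ2eq]
  have hI : I^2 = -1 := Complex.I_sq
  linear_combination (-2 * (y : ℂ) * I) * ((θ1 : ℂ) * hβC + keyC)
    + (-2 * (σ22:ℂ) * r21 * r22 * (y:ℂ)^3 * I) * hI
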